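/- Let G be a finitely generated group with positive rank gradient, and let A, B be finitely generated subgroups of infinite proindex in G. Then there exist a finite index subgroup A₀ of A and a finite index subgroup B₀ of B such that the subgroup of G generated by A₀ ∪ B₀ has infinite index in G. -/

import Mathlib

open scoped Pointwise

universe u

/-- `d(H)`: the smallest cardinality of a generating set of the subgroup `H`. -/
noncomputable def subgroupRank {G : Type u} [Group G] (H : Subgroup G) : ℕ :=
  sInf {n : ℕ | ∃ S : Finset G, S.card = n ∧ Subgroup.closure (S : Set G) = H}

/-- The rank gradient `∇G = inf (d(U) - 1)/[G : U]` over finite index subgroups `U`. -/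
noncomputable def rankGradient (G : Type u) [Group G] : ℝ :=
  sInf {r : ℝ | ∃ U : Subgroup G, U.FiniteIndex ∧
    r = ((subgroupRank U : ℝ) - 1) / (U.index : ℝ)}

/-- `G` is LERF if every finitely generated subgroup is an intersection of
finite index subgroups. -/
def IsLERF (G : Type u) [Group G] : Prop :=
  ∀ H : Subgroup G, H.FG →
    ∃ 𝒮 : Set (Subgroup G), (∀ U ∈ 𝒮, U.FiniteIndex) ∧ H = sInf 𝒮

/-- `G` is LPF if every finitely generated subgroup of infinite index is contained in
finite index subgroups of arbitrarily large index. -/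
def IsLPF (G : Type u) [Group G] : Prop :=
  ∀ H : Subgroup G, H.FG → H.index = 0 →
    ∀ n : ℕ, ∃ U : Subgroup G, H ≤ U ∧ U.FiniteIndex ∧ n ≤ U.index

/-- An epimorphism from `G` onto a finite group. -/
structure FiniteQuotient (G : Type u) [Group G] where
  K : Type u
  [grp : Group K]
  [fin : Fintype K]
  φ : G →* K
  surj : Function.Surjective φ

attribute [instance] FiniteQuotient.grp FiniteQuotient.fin

/-- The profinite measure `μ(S) = inf |φ(S)|/|φ(G)|` over epimorphisms `φ` from `G`
onto finite groups. -/
noncomputable def profiniteMeasure {G : Type u} [Group G] (S : Set G) : ℝ :=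
  sInf {r : ℝ | ∃ q : FiniteQuotient G,
    r = (Set.ncard (q.φ '' S) : ℝ) / (Fintype.card q.K : ℝ)}

/-- The product set `H₁H₂⋯Hₙ`. -/
def productSet {G : Type u} [Group G] {n : ℕ} (H : Fin n → Subgroup G) : Set G :=
  {g : G | ∃ f : Fin n → G, (∀ i, f i ∈ H i) ∧ g = (List.ofFn f).prod}

namespace StmtAux

open Subgroup

variable {G : Type u} [Group G]

lemma subgroupRank_le {H : Subgroup G} {S : Finset G}
    (hS : Subgroup.closure (S : Set G) = H) : subgroupRank H ≤ S.card :=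
  Nat.sInf_le ⟨S, rfl, hS⟩

lemma exists_finset_subgroupRank {H : Subgroup G} (hH : H.FG) :
    ∃ S : Finset G, S.card = subgroupRank H ∧ Subgroup.closure (S : Set G) = H := by
  obtain ⟨S, hS⟩ := hH
  have hne : {n : ℕ | ∃ S : Finset G, S.card = n ∧ Subgroup.closure (S : Set G) = H}.Nonempty :=
    ⟨S.card, S, rfl, hS⟩
  exact Nat.sInf_mem hne

lemma subgroupRank_sup_le {P Q : Subgroup G} (hP : P.FG) (hQ : Q.FG) :
    subgroupRank (P ⊔ Q) ≤ subgroupRank P + subgroupRank Q := by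
  classical
  obtain ⟨S, hScard, hS⟩ := exists_finset_subgroupRank hP
  obtain ⟨T, hTcard, hT⟩ := exists_finset_subgroupRank hQ
  have hclos : Subgroup.closure ((↑(S ∪ T) : Set G)) = P ⊔ Q := by
    rw [Finset.coe_union, Subgroup.closure_union, hS, hT]
  calc subgroupRank (P ⊔ Q) ≤ (S ∪ T).card := subgroupRank_le hclos
    _ ≤ S.card + T.card := Finset.card_union_le _ _
    _ = _ := by rw [hScard, hTcard]

lemma fg_coe {P : Subgroup G} (hP : P.FG) : Group.FG ↥P := by
  obtain ⟨S, hS⟩ := hP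
  exact hS ▸ Group.closure_finset_fg S

lemma rank_le_subgroupRank {P : Subgroup G} (hP : P.FG) :
    @Group.rank ↥P _ (fg_coe hP) ≤ subgroupRank P := by
  haveI := fg_coe hP
  obtain ⟨S, hScard, hS⟩ := exists_finset_subgroupRank hP
  subst hS
  exact (Subgroup.rank_closure_finset_le_card S).trans_eq hScard

lemma exists_gen_of_rank {Γ : Type*} [Group Γ] (K : Subgroup Γ) [hfgK : Group.FG ↥K] :
    ∃ S : Finset Γ, S.card ≤ Group.rank ↥K ∧ Subgroup.closure (S : Set Γ) = K := by
  classical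
  obtain ⟨T, hTcard, hT⟩ := Group.rank_spec ↥K
  refine ⟨T.image K.subtype, ?_, ?_⟩
  · exact Finset.card_image_le.trans_eq hTcard
  · rw [Finset.coe_image, ← MonoidHom.map_closure, hT, ← MonoidHom.range_eq_map, K.range_subtype]

/-- quantitative Schreier: `d(P₀) ≤ [P:P₀] ⬝ d(P)`, plus `P₀` is f.g. -/
lemma schreier {P₀ P : Subgroup G} (hfg : P.FG) (hle : P₀ ≤ P)
    (hri : P₀.relIndex P ≠ 0) :
    subgroupRank P₀ ≤ P₀.relIndex P * subgroupRank P ∧ P₀.FG := by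
  classical
  haveI : Group.FG ↥P := fg_coe hfg
  haveI : (P₀.subgroupOf P).FiniteIndex := ⟨hri⟩
  obtain ⟨S, hScard, hS⟩ := exists_gen_of_rank (P₀.subgroupOf P)
  have hclos : Subgroup.closure ((↑(S.image P.subtype) : Set G)) = P₀ := by
    rw [Finset.coe_image, ← MonoidHom.map_closure, hS, Subgroup.subgroupOf_map_subtype,
      inf_of_le_left hle]
  refine ⟨?_, ⟨S.image P.subtype, hclos⟩⟩
  calc subgroupRank P₀ ≤ (S.image P.subtype).card := subgroupRank_le hclos
    _ ≤ S.card := Finset.card_image_le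
    _ ≤ Group.rank ↥(P₀.subgroupOf P) := hScard
    _ ≤ (P₀.subgroupOf P).index * Group.rank ↥P := Subgroup.rank_le_index_mul_rank (P₀.subgroupOf P)
    _ ≤ P₀.relIndex P * subgroupRank P := by
        exact Nat.mul_le_mul le_rfl (rank_le_subgroupRank hfg)

lemma nabla_le (hrg : 0 < rankGradient G) {W : Subgroup G} (hW : W.FiniteIndex) :
    rankGradient G * W.index + 1 ≤ (subgroupRank W : ℝ) := by
  have hbdd : BddBelow {r : ℝ | ∃ U : Subgroup G, U.FiniteIndex ∧
      r = ((subgroupRank U : ℝ) - 1) / (U.index : ℝ)} := by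
    by_contra h
    rw [rankGradient, csInf_of_not_bddBelow h, Real.sInf_empty] at hrg
    exact lt_irrefl _ hrg
  have hmem : ((subgroupRank W : ℝ) - 1) / (W.index : ℝ) ∈ {r : ℝ | ∃ U : Subgroup G,
      U.FiniteIndex ∧ r = ((subgroupRank U : ℝ) - 1) / (U.index : ℝ)} := ⟨W, hW, rfl⟩
  have hle : rankGradient G ≤ ((subgroupRank W : ℝ) - 1) / (W.index : ℝ) :=
    csInf_le hbdd hmem
  have hpos : (0 : ℝ) < (W.index : ℝ) := by
    exact_mod_cast Nat.pos_of_ne_zero hW.index_ne_zero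
  have := (le_div_iff₀ hpos).mp hle
  linarith

end StmtAux

theorem stmt_6 {G : Type u} [Group G] (hfg : Group.FG G) (hrg : 0 < rankGradient G)
    (A B : Subgroup G) (hA : A.FG) (hB : B.FG)
    (hApi : ∀ n : ℕ, ∃ U : Subgroup G, A ≤ U ∧ U.FiniteIndex ∧ n ≤ U.index)
    (hBpi : ∀ n : ℕ, ∃ U : Subgroup G, B ≤ U ∧ U.FiniteIndex ∧ n ≤ U.index) :
    ∃ (A₀ B₀ : Subgroup G), A₀ ≤ A ∧ A₀.relIndex A ≠ 0 ∧ B₀ ≤ B ∧ B₀.relIndex B ≠ 0 ∧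
      (A₀ ⊔ B₀).index = 0 := by
  classical
  have hLB := fun (W : Subgroup G) (hW : W.FiniteIndex) => StmtAux.nabla_le hrg hW
  set a := subgroupRank A with ha
  set b := subgroupRank B with hb
  obtain ⟨n₁, hn₁⟩ := exists_nat_gt ((2 * (a : ℝ) + 2) / rankGradient G)
  obtain ⟨U, hAU, hUfi, hUn⟩ := hApi n₁
  haveI := hUfi
  set B' := B ⊓ U with hB'def
  have hB'B : B' ≤ B := inf_le_left
  have hriB' : B'.relIndex B ≠ 0 := by
    rw [hB'def, Subgroup.inf_relIndex_left]
    exact Subgroup.FiniteIndex.index_ne_zero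
  set H := A ⊔ B' with hHdef
  by_cases hH : H.index = 0
  · exact ⟨A, B', le_refl A, by simp [Subgroup.relIndex_self], hB'B, hriB', hH⟩
  haveI hHfi : H.FiniteIndex := ⟨hH⟩
  obtain ⟨hB'rk, hB'fg⟩ := StmtAux.schreier hB hB'B hriB'
  set β := B'.relIndex B with hβdef
  have hAH : A ≤ H := le_sup_left
  have hHU : H ≤ U := sup_le hAU inf_le_right
  have hUh : U.index ≤ H.index :=
    Nat.le_of_dvd (Nat.pos_of_ne_zero hH) (Subgroup.index_dvd_of_le hHU)
  obtain ⟨V, hBV, hVfi, hVm⟩ := hBpi (H.index * (β * b + 1))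
  haveI := hVfi
  set U₂ := V ⊓ H with hU₂def
  have hU₂fi : U₂.FiniteIndex := ⟨Subgroup.index_inf_ne_zero hVfi.index_ne_zero hH⟩
  haveI := hU₂fi
  set A' := A ⊓ U₂ with hA'def
  have hA'A : A' ≤ A := inf_le_left
  have hriA' : A'.relIndex A ≠ 0 := by
    rw [hA'def, Subgroup.inf_relIndex_left]
    exact Subgroup.FiniteIndex.index_ne_zero
  set H₂ := A' ⊔ B' with hH₂def
  by_cases hK : H₂.index = 0
  · exact ⟨A', B', hA'A, hriA', hB'B, hriB', hK⟩
  exfalso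
  haveI hH₂fi : H₂.FiniteIndex := ⟨hK⟩
  have hA'U₂ : A' ≤ U₂ := inf_le_right
  have hB'U₂ : B' ≤ U₂ := le_inf (hB'B.trans hBV) le_sup_right
  have hH₂U₂ : H₂ ≤ U₂ := sup_le hA'U₂ hB'U₂
  have hU₂H : U₂ ≤ H := inf_le_right
  have hH₂H : H₂ ≤ H := le_trans hH₂U₂ hU₂H
  have hqh : H₂.relIndex H * H.index = H₂.index := Subgroup.relIndex_mul_index hH₂H
  have hq0 : H₂.relIndex H ≠ 0 := by
    intro e; rw [e, zero_mul] at hqh; exact hK hqh.symm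
  have hth : U₂.relIndex H * H.index = U₂.index := Subgroup.relIndex_mul_index hU₂H
  have ht0 : U₂.relIndex H ≠ 0 := by
    intro e; rw [e, zero_mul] at hth; exact hU₂fi.index_ne_zero hth.symm
  have htq : U₂.relIndex H ≤ H₂.relIndex H := Subgroup.relIndex_le_of_le_left hH₂U₂ hq0
  have hVU₂ : V.index ≤ U₂.index :=
    Nat.le_of_dvd (Nat.pos_of_ne_zero hU₂fi.index_ne_zero) (Subgroup.index_dvd_of_le inf_le_left)
  have hm₂ : H.index * (β * b + 1) ≤ U₂.relIndex H * H.index := by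
    rw [hth]; exact le_trans hVm hVU₂
  have htlb : β * b + 1 ≤ U₂.relIndex H := by
    rw [mul_comm (U₂.relIndex H) H.index] at hm₂
    exact Nat.le_of_mul_le_mul_left hm₂ (Nat.pos_of_ne_zero hH)
  have hrAA' : A'.relIndex A ≤ H₂.relIndex H := by
    calc A'.relIndex A = U₂.relIndex A := by rw [hA'def, Subgroup.inf_relIndex_left]
      _ ≤ U₂.relIndex H := Subgroup.relIndex_le_of_le_right hAH ht0
      _ ≤ H₂.relIndex H := htq
  obtain ⟨hA'rk, hA'fg⟩ := StmtAux.schreier hA hA'A hriA'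
  have hd : subgroupRank H₂ ≤ H₂.relIndex H * a + β * b := by
    refine (StmtAux.subgroupRank_sup_le hA'fg hB'fg).trans ?_
    exact Nat.add_le_add (hA'rk.trans (Nat.mul_le_mul hrAA' le_rfl)) hB'rk
  -- pass to the reals
  have hlow := hLB H₂ hH₂fi
  have hcastk : ((H₂.index : ℝ)) = (H₂.relIndex H : ℝ) * (H.index : ℝ) := by
    exact_mod_cast hqh.symm
  have hlow2 : rankGradient G * ((H₂.relIndex H : ℝ) * (H.index : ℝ)) + 1
      ≤ (subgroupRank H₂ : ℝ) := by rw [← hcastk]; exact hlow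
  have hn₁h : (n₁ : ℝ) ≤ (H.index : ℝ) := by exact_mod_cast le_trans hUn hUh
  have h2a2 : 2 * (a : ℝ) + 2 ≤ rankGradient G * (H.index : ℝ) := by
    rw [div_lt_iff₀ hrg] at hn₁
    have h3 : rankGradient G * (n₁ : ℝ) ≤ rankGradient G * (H.index : ℝ) :=
      mul_le_mul_of_nonneg_left hn₁h hrg.le
    nlinarith [hn₁, h3]
  have hdR : (subgroupRank H₂ : ℝ) ≤ (H₂.relIndex H : ℝ) * a + (β : ℝ) * b := by
    exact_mod_cast hd
  have htlbR : (β : ℝ) * b + 1 ≤ (H₂.relIndex H : ℝ) := by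
    exact_mod_cast le_trans htlb htq
  have hq1 : (1 : ℝ) ≤ (H₂.relIndex H : ℝ) := by
    exact_mod_cast Nat.one_le_iff_ne_zero.mpr hq0
  have ha0 : (0 : ℝ) ≤ (a : ℝ) := Nat.cast_nonneg a
  have keymul : (H₂.relIndex H : ℝ) * (2 * (a : ℝ) + 2)
      ≤ (H₂.relIndex H : ℝ) * (rankGradient G * (H.index : ℝ)) :=
    mul_le_mul_of_nonneg_left h2a2 (by positivity)
  nlinarith [hlow2, hdR, htlbR, hq1, keymul, mul_nonneg (le_trans zero_le_one hq1) ha0]
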